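/- For every pair of multi-indices a, b ∈ [𝐧], the polynomial x_a x_b − x_{a ∧̄ b} x_{a ∨̄ b} belongs to the ideal I_∞ = ⟨ x_a² − 1, x_a x_b − x_{a∧b} x_{a∨b} : a, b ∈ [𝐧] ⟩. -/
import Mathlib


open MvPolynomial

/-- Multi-index set `[n₁] × ⋯ × [n_d]`. -/
abbrev Idx {d : ℕ} (n : Fin d → ℕ) : Type := ∀ i, Fin (n i)

/-- Componentwise minimum of multi-indices. -/
def amin {d : ℕ} {n : Fin d → ℕ} (a b : Idx n) : Idx n := fun i => min (a i) (b i)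

/-- Componentwise maximum of multi-indices. -/
def amax {d : ℕ} {n : Fin d → ℕ} (a b : Idx n) : Idx n := fun i => max (a i) (b i)

/-- Lexicographic order on multi-indices: `a < b` iff at the first position where they
differ, `a` is smaller.  (With this convention the variable `x_a` is *larger* in the
variable order `x_{1⋯1} > x_{1⋯2} > ⋯ > x_{n₁⋯n_d}` exactly when `a` is lexicographically
smaller.) -/
def idxLt {d : ℕ} {n : Fin d → ℕ} (a b : Idx n) : Prop :=
  ∃ i, a i < b i ∧ ∀ j, j < i → a j = b j

/-- Total degree of an exponent vector. -/
def expDeg {σ : Type*} (α : σ →₀ ℕ) : ℕ := α.sum fun _ k => k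

/-- The graded reverse lexicographic order on exponent vectors (viewing the variable
`x_a` with lexicographically smaller index `a` as the larger variable): `α < β` iff
`deg α < deg β`, or the degrees agree and at the largest (in the variable order, i.e.
lexicographically largest) index where they differ, `α` has the *larger* exponent. -/
def grevlexLt {d : ℕ} {n : Fin d → ℕ} (α β : Idx n →₀ ℕ) : Prop :=
  expDeg α < expDeg β ∨
    (expDeg α = expDeg β ∧ ∃ j, β j < α j ∧ ∀ k, idxLt j k → α k = β k)

/-- `m` is the leading monomial (w.r.t. grevlex) of the polynomial `f`. -/
def IsLeadMon {d : ℕ} {n : Fin d → ℕ} (f : MvPolynomial (Idx n) ℝ)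
    (m : Idx n →₀ ℕ) : Prop :=
  m ∈ f.support ∧ ∀ m' ∈ f.support, m' ≠ m → grevlexLt m' m

/-- `G` is a Gröbner basis of the ideal `I` w.r.t. grevlex: `G` generates `I` and the
leading monomial of every nonzero element of `I` is divisible by the leading monomial of
some element of `G`. -/
def IsGroebnerBasis {d : ℕ} {n : Fin d → ℕ} (G : Set (MvPolynomial (Idx n) ℝ))
    (I : Ideal (MvPolynomial (Idx n) ℝ)) : Prop :=
  Ideal.span G = I ∧
    ∀ f ∈ I, f ≠ 0 → ∀ m, IsLeadMon f m →
      ∃ g ∈ G, ∃ mg, IsLeadMon g mg ∧ mg ≤ m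

/-- `G` is a *reduced* Gröbner basis of `I`: it is a Gröbner basis, every element is monic,
and no monomial of an element of `G` is divisible by the leading monomial of another
element of `G`. -/
def IsReducedGroebnerBasis {d : ℕ} {n : Fin d → ℕ} (G : Set (MvPolynomial (Idx n) ℝ))
    (I : Ideal (MvPolynomial (Idx n) ℝ)) : Prop :=
  IsGroebnerBasis G I ∧
    ∀ g ∈ G, (∀ m, IsLeadMon g m → coeff m g = 1) ∧
      ∀ m ∈ g.support, ∀ g' ∈ G, g' ≠ g → ∀ m', IsLeadMon g' m' → ¬ m' ≤ m

/-- The set of rank-1 binomials `x_a x_b − x_{a∧b} x_{a∨b}`. -/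
noncomputable def rk1Binomials {d : ℕ} (n : Fin d → ℕ) : Set (MvPolynomial (Idx n) ℝ) :=
  {f | ∃ a b : Idx n, f = X a * X b - X (amin a b) * X (amax a b)}

/-- The ideal `I₀` generated by all rank-1 binomials. -/
noncomputable def I0 {d : ℕ} (n : Fin d → ℕ) : Ideal (MvPolynomial (Idx n) ℝ) :=
  Ideal.span (rk1Binomials n)

/-- The reduced Gröbner basis `𝒢₀` of `I₀`. -/
noncomputable def G0 {d : ℕ} (n : Fin d → ℕ) : Set (MvPolynomial (Idx n) ℝ) :=
  {f | ∃ a b : Idx n, idxLt a b ∧ (∃ i, b i < a i) ∧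
    f = X a * X b - X (amin a b) * X (amax a b)}

/-- The largest element of `Fin m` (corresponding to the index value `n_i`). -/
def lastF (m : ℕ) [NeZero m] : Fin m :=
  ⟨m - 1, Nat.sub_lt (Nat.pos_of_ne_zero (NeZero.ne m)) one_pos⟩

/-- `(a ∧̄ b)_i = min(a_i, b_i)` if `a_i ≠ b_i`, and `n_i` otherwise. -/
def bmin {d : ℕ} {n : Fin d → ℕ} [∀ i, NeZero (n i)] (a b : Idx n) : Idx n :=
  fun i => if a i = b i then lastF (n i) else min (a i) (b i)

/-- `(a ∨̄ b)_i = max(a_i, b_i)` if `a_i ≠ b_i`, and `n_i` otherwise. -/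
def bmax {d : ℕ} {n : Fin d → ℕ} [∀ i, NeZero (n i)] (a b : Idx n) : Idx n :=
  fun i => if a i = b i then lastF (n i) else max (a i) (b i)

/-- The ideal `I_∞ = ⟨x_a² − 1, x_a x_b − x_{a∧b} x_{a∨b} : a, b ∈ [𝐧]⟩`. -/
noncomputable def Iinf {d : ℕ} (n : Fin d → ℕ) : Ideal (MvPolynomial (Idx n) ℝ) :=
  Ideal.span ({f | ∃ a : Idx n, f = X a ^ 2 - 1} ∪ rk1Binomials n)

/-- For every pair of multi-indices `a, b`, the polynomial
`x_a x_b − x_{a∧̄b} x_{a∨̄b}` belongs to `I_∞`. -/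
theorem barBinomial_mem_Iinf {d : ℕ} {n : Fin d → ℕ} [∀ i, NeZero (n i)]
    (a b : Idx n) :
    X a * X b - X (bmin a b) * X (bmax a b) ∈ Iinf n := by
  set c := amin a b with hc
  set e := amax a b with he
  set c' := bmin a b with hc'
  set e' := bmax a b with he'
  have hle : ∀ i, (a i : ℕ) ≤ n i - 1 := fun i => by
    have := (a i).isLt; omega
  have hlastF : ∀ i (x : Fin (n i)), x ≤ lastF (n i) := fun i x => by
    rw [Fin.le_def]
    have := x.isLt
    simp only [lastF]
    omega
  have hmin : amin c' e = c := by
    funext i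
    simp only [amin, amax, bmin, bmax, hc, he, hc']
    by_cases h : a i = b i
    · simp only [h, if_true, min_self, max_self]
      exact min_eq_right (hlastF i (b i))
    · simp only [if_neg h]
      exact min_eq_left min_le_max
  have hmax : amax c' e = e' := by
    funext i
    simp only [amin, amax, bmin, bmax, hc, he, hc', he']
    by_cases h : a i = b i
    · simp only [h, if_true, min_self, max_self]
      exact max_eq_left (hlastF i (b i))
    · simp only [if_neg h]
      exact max_eq_right min_le_max
  have g1 : X a * X b - X c * X e ∈ Iinf n :=
    Ideal.subset_span (Or.inr ⟨a, b, rfl⟩)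
  have g2 : X c' ^ 2 - 1 ∈ Iinf n :=
    Ideal.subset_span (Or.inl ⟨c', rfl⟩)
  have g3 : X c' * X e - X c * X e' ∈ Iinf n := by
    have : X (σ := Idx n) (R := ℝ) c' * X e - X (amin c' e) * X (amax c' e) ∈ Iinf n :=
      Ideal.subset_span (Or.inr ⟨c', e, rfl⟩)
    rwa [hmin, hmax] at this
  have g4 : X c ^ 2 - 1 ∈ Iinf n := Ideal.subset_span (Or.inl ⟨c, rfl⟩)
  have key : X (σ := Idx n) (R := ℝ) a * X b - X c' * X e' =
      (X a * X b - X c * X e) + (-(X c * X e)) * (X c' ^ 2 - 1)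
        + (X c' * X c) * (X c' * X e - X c * X e')
        + (X c' * X e') * (X c ^ 2 - 1) := by ring
  rw [key]
  exact Ideal.add_mem _ (Ideal.add_mem _ (Ideal.add_mem _ g1
    (Ideal.mul_mem_left _ _ g2)) (Ideal.mul_mem_left _ _ g3))
    (Ideal.mul_mem_left _ _ g4)
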